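/- Let G be a metrizable paratopological group with a suitable set S and let H be a dense subgroup of G. Then H has a suitable set of size at most |S| · ℵ₀. -/

import Mathlib

section Aux

variable {G : Type*} [MetricSpace G]

/-- If a sequence has its odd entries within `2⁻¹^k` of `x` and its even entries within
`2⁻¹^k` of `y`, then any point distinct from `x` and `y` is either isolated from the
sequence or one of its values. -/
lemma seq_aux {c : ℕ → G} {x y : G}
    (hx : ∀ k, dist (c (2 * k + 1)) x ≤ (2 : ℝ)⁻¹ ^ k)
    (hy : ∀ k, dist (c (2 * k)) y ≤ (2 : ℝ)⁻¹ ^ k)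
    {z : G} (hzx : z ≠ x) (hzy : z ≠ y) :
    ∃ ε > 0, ∀ n, dist z (c n) < ε → c n = z := by
  set α := min (dist z x) (dist z y) with hα
  have hαpos : 0 < α := lt_min (dist_pos.mpr hzx) (dist_pos.mpr hzy)
  obtain ⟨N, hN⟩ : ∃ N : ℕ, (2 : ℝ)⁻¹ ^ N < α / 2 :=
    exists_pow_lt_of_lt_one (by positivity) (by norm_num)
  have hfin : (c '' {n | n < 2 * N + 2} \ {z}).Finite :=
    ((Set.finite_Iio (2 * N + 2)).image c).diff
  have hzmem : z ∈ (c '' {n | n < 2 * N + 2} \ {z})ᶜ := by simp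
  obtain ⟨ε₁, hε₁pos, hball⟩ := Metric.isOpen_iff.mp hfin.isClosed.isOpen_compl z hzmem
  refine ⟨min ε₁ (α / 2), by positivity, ?_⟩
  intro n hn
  rcases lt_or_ge n (2 * N + 2) with h | h
  · by_contra hne
    have hmem : c n ∈ c '' {n | n < 2 * N + 2} \ {z} := ⟨⟨n, h, rfl⟩, hne⟩
    have : c n ∈ Metric.ball z (min ε₁ (α / 2)) := by
      rw [Metric.mem_ball, dist_comm]; exact hn
    exact hball (Metric.ball_subset_ball (min_le_left _ _) this) hmem
  · exfalso
    have hnlt : dist z (c n) < α / 2 := lt_of_lt_of_le hn (min_le_right _ _)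
    rcases Nat.even_or_odd n with ⟨k, hk⟩ | ⟨k, hk⟩
    · have hn2 : n = 2 * k := by omega
      have hkN : N ≤ k := by omega
      have hb : dist (c n) y ≤ (2 : ℝ)⁻¹ ^ k := hn2 ▸ hy k
      have hpow : (2 : ℝ)⁻¹ ^ k ≤ (2 : ℝ)⁻¹ ^ N :=
        pow_le_pow_of_le_one (by norm_num) (by norm_num) hkN
      have htri : dist z y ≤ dist z (c n) + dist (c n) y := dist_triangle _ _ _
      have hzy' : α ≤ dist z y := min_le_right _ _
      linarith
    · have hkN : N ≤ k := by omega
      have hb : dist (c n) x ≤ (2 : ℝ)⁻¹ ^ k := hk ▸ hx k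
      have hpow : (2 : ℝ)⁻¹ ^ k ≤ (2 : ℝ)⁻¹ ^ N :=
        pow_le_pow_of_le_one (by norm_num) (by norm_num) hkN
      have htri : dist z x ≤ dist z (c n) + dist (c n) x := dist_triangle _ _ _
      have hzx' : α ≤ dist z x := min_le_left _ _
      linarith

lemma seq_closure {c : ℕ → G} {x y : G}
    (hx : ∀ k, dist (c (2 * k + 1)) x ≤ (2 : ℝ)⁻¹ ^ k)
    (hy : ∀ k, dist (c (2 * k)) y ≤ (2 : ℝ)⁻¹ ^ k) :
    closure (Set.range c) ⊆ Set.range c ∪ {x, y} := by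
  intro z hz
  by_contra hzn
  simp only [Set.mem_union, Set.mem_insert_iff, Set.mem_singleton_iff, not_or] at hzn
  obtain ⟨hzr, hzx, hzy⟩ := hzn
  obtain ⟨ε, hεpos, hsep⟩ := seq_aux hx hy hzx hzy
  obtain ⟨g, hg, hdist⟩ := Metric.mem_closure_iff.mp hz ε hεpos
  obtain ⟨n, rfl⟩ := hg
  exact hzr ⟨n, hsep n hdist⟩

lemma seq_iso {c : ℕ → G} {x y : G}
    (hx : ∀ k, dist (c (2 * k + 1)) x ≤ (2 : ℝ)⁻¹ ^ k)
    (hy : ∀ k, dist (c (2 * k)) y ≤ (2 : ℝ)⁻¹ ^ k)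
    (hxr : x ∉ Set.range c) (hyr : y ∉ Set.range c) :
    ∀ j, ∃ ε > 0, ∀ k, dist (c j) (c k) < ε → c k = c j :=
  fun j => seq_aux hx hy (fun h => hxr (h ▸ ⟨j, rfl⟩)) (fun h => hyr (h ▸ ⟨j, rfl⟩))

end Aux

section PerPoint

variable {G : Type*} [Group G] [MetricSpace G] [ContinuousMul G]

lemma per_s (H : Subgroup G) (hH : Dense (H : Set G)) (s : G) (ρ : ℝ) (hρ : 0 < ρ) :
    ∃ (c : ℕ → G) (x : G),
      (∀ k, c k ∈ (H : Set G)) ∧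
      (∀ k, dist (c k) s ≤ ρ) ∧
      closure (Set.range c) ⊆ Set.range c ∪ {x, s} ∧
      (x ∈ (H : Set G) → x ∈ Set.range c) ∧
      (s ∈ (H : Set G) → s ∈ Set.range c) ∧
      s ∈ closure ((Subgroup.closure (Set.range c) : Subgroup G) : Set G) ∧
      s⁻¹ ∈ closure ((Subgroup.closure (Set.range c) : Subgroup G) : Set G) ∧
      (∀ j, ∃ ε > 0, ∀ k, dist (c j) (c k) < ε → c k = c j) := by
  by_cases hsH : s ∈ (H : Set G)
  · refine ⟨fun _ => s, s, fun _ => hsH, fun _ => by simpa using hρ.le, ?_, fun _ => ⟨0, rfl⟩,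
      fun _ => ⟨0, rfl⟩, ?_, ?_, fun j => ⟨1, one_pos, fun k _ => rfl⟩⟩
    · rw [Set.range_const, closure_singleton]
      intro z hz; exact Or.inl (by simpa using hz)
    · exact subset_closure (Subgroup.subset_closure ⟨0, rfl⟩)
    · exact subset_closure ((Subgroup.closure _).inv_mem (Subgroup.subset_closure ⟨0, rfl⟩))
  · -- main construction
    have hψ : Continuous fun g : G => s⁻¹ * g * s :=
      (continuous_const.mul continuous_id).mul continuous_const
    obtain ⟨δ₀, hδ₀pos, hδ₀⟩ :=
      Metric.continuousAt_iff.mp hψ.continuousAt (ε := ρ / 2) (by positivity)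
    set δ : ℝ := min δ₀ (min (ρ / 2) 2⁻¹) with hδdef
    have hδpos : 0 < δ := by
      apply lt_min hδ₀pos; apply lt_min (by positivity); norm_num
    have hδρ : δ ≤ ρ / 2 := le_trans (min_le_right _ _) (min_le_left _ _)
    have hδhalf : δ ≤ 2⁻¹ := le_trans (min_le_right _ _) (min_le_right _ _)
    obtain ⟨u, huH, hud⟩ := hH.exists_dist_lt s hδpos
    have hud' : dist u s < δ := by rwa [dist_comm] at hud
    -- the open set O
    set O : Set G := (fun g => u⁻¹ * g) ⁻¹' Metric.ball s δ ∩
        (fun g => s⁻¹ * g) ⁻¹' Metric.ball s (ρ / 2) with hOdef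
    have hOopen : IsOpen O :=
      ((Metric.isOpen_ball.preimage (continuous_const.mul continuous_id))).inter
        ((Metric.isOpen_ball.preimage (continuous_const.mul continuous_id)))
    have hwO : u * s ∈ O := by
      constructor
      · show u⁻¹ * (u * s) ∈ Metric.ball s δ
        simp [← mul_assoc, Metric.mem_ball, hδpos]
      · show s⁻¹ * (u * s) ∈ Metric.ball s (ρ / 2)
        have h1 := hδ₀ (x := u) (lt_of_lt_of_le hud' (min_le_left _ _))
        rw [inv_mul_cancel, one_mul] at h1
        rw [Metric.mem_ball, ← mul_assoc]
        exact h1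
    obtain ⟨m, hmH, hmO⟩ := hH.exists_mem_open hOopen ⟨u * s, hwO⟩
    have hvd : dist (u⁻¹ * m) s < δ := hmO.1
    have hxd : dist (s⁻¹ * m) s < ρ / 2 := hmO.2
    set v : G := u⁻¹ * m with hvdef
    set x : G := s⁻¹ * m with hxdef
    have hvH : v ∈ (H : Set G) := H.mul_mem (H.inv_mem huH) hmH
    have hxH : x ∉ (H : Set G) := by
      intro hx
      have hseq : s = m * x⁻¹ := by rw [hxdef]; group
      exact hsH (by rw [hseq]; exact H.mul_mem hmH (H.inv_mem hx))
    -- approximating sequences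
    have haex : ∀ k : ℕ, ∃ a ∈ (H : Set G), dist x a < min (ρ / 2) ((2 : ℝ)⁻¹ ^ k) := by
      intro k
      exact hH.exists_dist_lt x (lt_min (by positivity) (by positivity))
    choose a haH had using haex
    have hbex : ∀ k : ℕ, ∃ b ∈ (H : Set G), dist s b < min ρ ((2 : ℝ)⁻¹ ^ (k + 2)) := by
      intro k
      exact hH.exists_dist_lt s (lt_min hρ (by positivity))
    choose b hbH hbd using hbex
    -- the combined sequence
    set e : ℕ → G := fun k => match k with | 0 => u | 1 => v | (k + 2) => b k with hedef
    set c : ℕ → G := fun n => if n % 2 = 0 then e (n / 2) else a (n / 2) with hcdef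
    have hce : ∀ k, c (2 * k) = e k := by
      intro k; simp only [hcdef]
      rw [if_pos (by omega)]; congr 1; omega
    have hco : ∀ k, c (2 * k + 1) = a k := by
      intro k; simp only [hcdef]
      rw [if_neg (by omega)]; congr 1; omega
    -- bounds
    have heven : ∀ k, dist (c (2 * k)) s ≤ min ρ ((2 : ℝ)⁻¹ ^ k) := by
      intro k
      rw [hce]
      match k with
      | 0 =>
        show dist u s ≤ _
        have : (2:ℝ)⁻¹ ^ 0 = 1 := by norm_num
        rw [this]
        refine le_min (le_trans hud'.le (by linarith)) (le_trans hud'.le (by linarith [hδhalf]))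
      | 1 =>
        show dist v s ≤ _
        have : (2:ℝ)⁻¹ ^ 1 = 2⁻¹ := by norm_num
        rw [this]
        exact le_min (le_trans hvd.le (by linarith)) (le_trans hvd.le hδhalf)
      | (k + 2) =>
        show dist (b k) s ≤ _
        rw [dist_comm]
        refine le_trans (hbd k).le (min_le_min le_rfl ?_)
        exact pow_le_pow_of_le_one (by norm_num) (by norm_num) (by omega)
    have hodd : ∀ k, dist (c (2 * k + 1)) x ≤ min (ρ / 2) ((2 : ℝ)⁻¹ ^ k) := by
      intro k; rw [hco, dist_comm]; exact (had k).le
    have hoddw : ∀ k, dist (c (2 * k + 1)) x ≤ (2 : ℝ)⁻¹ ^ k :=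
      fun k => le_trans (hodd k) (min_le_right _ _)
    have hevenw : ∀ k, dist (c (2 * k)) s ≤ (2 : ℝ)⁻¹ ^ k :=
      fun k => le_trans (heven k) (min_le_right _ _)
    -- membership in H
    have hcH : ∀ n, c n ∈ (H : Set G) := by
      intro n
      rcases Nat.even_or_odd n with ⟨k, hk⟩ | ⟨k, hk⟩
      · have : n = 2 * k := by omega
        rw [this, hce]
        match k with
        | 0 => exact huH
        | 1 => exact hvH
        | (k + 2) => exact hbH k
      · rw [hk, hco]; exact haH k
    have hxr : x ∉ Set.range c := fun ⟨n, hn⟩ => hxH (hn ▸ hcH n)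
    have hsr : s ∉ Set.range c := fun ⟨n, hn⟩ => hsH (hn ▸ hcH n)
    refine ⟨c, x, hcH, ?_, seq_closure hoddw hevenw, fun h => absurd h hxH,
      fun h => absurd h hsH, ?_, ?_, seq_iso hoddw hevenw hxr hsr⟩
    · -- all points within ρ of s
      intro n
      rcases Nat.even_or_odd n with ⟨k, hk⟩ | ⟨k, hk⟩
      · have hn2 : n = 2 * k := by omega
        rw [hn2]
        exact le_trans (heven k) (min_le_left _ _)
      · rw [hk]
        calc dist (c (2 * k + 1)) s ≤ dist (c (2 * k + 1)) x + dist x s := dist_triangle _ _ _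
          _ ≤ ρ / 2 + ρ / 2 := by
              refine add_le_add (le_trans (hodd k) (min_le_left _ _)) ?_
              rw [hxdef]; exact hxd.le
          _ = ρ := by ring
    · -- s in closure of generated subgroup
      rw [Metric.mem_closure_iff]
      intro ε hε
      obtain ⟨k, hk⟩ : ∃ k : ℕ, (2 : ℝ)⁻¹ ^ k < ε :=
        exists_pow_lt_of_lt_one hε (by norm_num)
      refine ⟨c (2 * (k + 2)), Subgroup.subset_closure ⟨2 * (k + 2), rfl⟩, ?_⟩
      rw [hce]
      show dist s (b k) < ε
      refine lt_of_lt_of_le (lt_of_lt_of_le (hbd k) (min_le_right _ _)) ?_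
      exact le_trans (pow_le_pow_of_le_one (by norm_num) (by norm_num) (by omega)) hk.le
    · -- s⁻¹ in closure of generated subgroup
      have hatend : Filter.Tendsto a Filter.atTop (nhds x) := by
        rw [tendsto_iff_dist_tendsto_zero]
        refine squeeze_zero (fun n => dist_nonneg) (fun n => ?_)
          (tendsto_pow_atTop_nhds_zero_of_lt_one (r := (2:ℝ)⁻¹) (by norm_num) (by norm_num))
        rw [dist_comm]
        exact (had n).le.trans (min_le_right _ _)
      have htend : Filter.Tendsto (fun k => a k * (v⁻¹ * u⁻¹)) Filter.atTop
          (nhds (x * (v⁻¹ * u⁻¹))) := hatend.mul tendsto_const_nhds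
      have hxv : x * (v⁻¹ * u⁻¹) = s⁻¹ := by
        rw [hxdef, hvdef]; group
      rw [← hxv]
      refine mem_closure_of_tendsto htend (Filter.Eventually.of_forall fun k => ?_)
      have ha' : a k ∈ Subgroup.closure (Set.range c) := by
        rw [← hco k]; exact Subgroup.subset_closure ⟨2 * k + 1, rfl⟩
      have hu' : u ∈ Subgroup.closure (Set.range c) := by
        have : c 0 = u := by rw [show (0:ℕ) = 2 * 0 by rfl, hce]
        rw [← this]; exact Subgroup.subset_closure ⟨0, rfl⟩
      have hv' : v ∈ Subgroup.closure (Set.range c) := by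
        have : c 2 = v := by rw [show (2:ℕ) = 2 * 1 by rfl, hce]
        rw [← this]; exact Subgroup.subset_closure ⟨2, rfl⟩
      exact Subgroup.mul_mem _ ha' (Subgroup.mul_mem _ (Subgroup.inv_mem _ hv')
        (Subgroup.inv_mem _ hu'))

end PerPoint

def IsSuitable {G : Type*} [Group G] [TopologicalSpace G] (S : Set G) : Prop :=
  DiscreteTopology S ∧ IsClosed (S ∪ {1}) ∧ Dense (Subgroup.closure S : Set G)

theorem stmt13 {G : Type*} [Group G] [TopologicalSpace G] [ContinuousMul G]
    [TopologicalSpace.MetrizableSpace G]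
    (S : Set G) (hS : IsSuitable S)
    (H : Subgroup G) (hH : Dense (H : Set G)) :
    ∃ T : Set H, IsSuitable T ∧ Cardinal.mk T ≤ Cardinal.mk S * Cardinal.aleph0 := by
  classical
  letI : MetricSpace G := TopologicalSpace.metrizableSpaceMetric G
  obtain ⟨hdisc, hclosed, hdense⟩ := hS
  set K : Set G := S ∪ {1} with hKdef
  -- isolation of points of S inside S
  have hSiso : ∀ s : ↥S, ∃ ε > 0, ∀ y ∈ S, dist (s : G) y < ε → y = (s : G) := by
    rintro ⟨sv, hsv⟩
    have h1 : ({(⟨sv, hsv⟩ : ↥S)} : Set ↥S) ∈ nhds (⟨sv, hsv⟩ : ↥S) := by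
      rw [nhds_discrete]; exact Filter.mem_pure.mpr rfl
    rw [nhds_subtype_eq_comap] at h1
    obtain ⟨U, hU, hUsub⟩ := Filter.mem_comap.mp h1
    obtain ⟨ε, hε, hball⟩ := Metric.mem_nhds_iff.mp hU
    refine ⟨ε, hε, fun y hy hdy => ?_⟩
    have hmem : (⟨y, hy⟩ : ↥S) ∈ Subtype.val ⁻¹' U := by
      apply hball
      rw [Metric.mem_ball, dist_comm]
      exact hdy
    have := hUsub hmem
    simpa using congrArg Subtype.val this
  -- isolation radii in K
  have hiso : ∀ s : ↥S, ∃ ρ > 0, ∀ y ∈ K, y ≠ (s : G) → 8 * ρ ≤ dist (s : G) y := by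
    intro s
    obtain ⟨ε, hε, hsep⟩ := hSiso s
    by_cases h1 : (s : G) = 1
    · refine ⟨ε / 8, by positivity, fun y hy hne => ?_⟩
      rcases hy with hy | hy
      · by_contra hlt
        push_neg at hlt
        exact hne (hsep y hy (by linarith))
      · exact absurd ((Set.mem_singleton_iff.mp hy).trans h1.symm) hne
    · have hd1 : 0 < dist (s : G) 1 := dist_pos.mpr h1
      refine ⟨min ε (dist (s : G) 1) / 8, by positivity, fun y hy hne => ?_⟩
      rcases hy with hy | hy
      · by_contra hlt
        push_neg at hlt
        have hm := min_le_left ε (dist (s : G) 1)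
        exact hne (hsep y hy (by linarith))
      · rw [Set.mem_singleton_iff.mp hy]
        have := min_le_right ε (dist (s : G) 1)
        linarith
  choose ρ hρpos hρsep using hiso
  have hex := fun s : ↥S => per_s H hH (s : G) (ρ s) (hρpos s)
  choose c x hcH hcd hccl hcxH hcsH hs_cl hsi_cl hciso using hex
  set Tg : Set G := ⋃ s : ↥S, Set.range (c s) with hTgdef
  have hTgH : Tg ⊆ (H : Set G) := by
    intro g hg
    obtain ⟨s, hs⟩ := Set.mem_iUnion.mp hg
    obtain ⟨k, rfl⟩ := hs
    exact hcH s k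
  set T : Set ↥H := Subtype.val ⁻¹' Tg with hTdef
  have hvalT : Subtype.val '' T = Tg := by
    ext g
    constructor
    · rintro ⟨h, hhT, rfl⟩; exact hhT
    · intro hg; exact ⟨⟨g, hTgH hg⟩, hg, rfl⟩
  have hcd' : ∀ (s : ↥S) (w : G), w ∈ Set.range (c s) → dist w (s : G) ≤ ρ s := by
    rintro s w ⟨k, rfl⟩; exact hcd s k
  -- cross separation
  have L1 : ∀ (y : G) (δ : ℝ), 0 < δ → (∀ z ∈ K, δ ≤ dist y z) →
      ∀ (s s' : ↥S), s ≠ s' → ∀ w ∈ Set.range (c s), ∀ w' ∈ Set.range (c s'),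
      dist y w < δ / 2 → dist y w' < δ / 2 → False := by
    intro y δ hδ hyK s s' hss w hw w' hw' h1 h2
    have hws : dist w (s : G) ≤ ρ s := hcd' s w hw
    have hws' : dist w' (s' : G) ≤ ρ s' := hcd' s' w' hw'
    have hsK : ((s' : G)) ∈ K := Or.inl s'.2
    have hsK2 : ((s : G)) ∈ K := Or.inl s.2
    have hsep1 : 8 * ρ s ≤ dist (s : G) (s' : G) :=
      hρsep s _ hsK (fun h => hss (Subtype.ext h.symm))
    have hsep2 : 8 * ρ s' ≤ dist (s' : G) (s : G) :=
      hρsep s' _ hsK2 (fun h => hss (Subtype.ext h))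
    have hys : δ ≤ dist y (s : G) := hyK _ hsK2
    have hys' : δ ≤ dist y (s' : G) := hyK _ hsK
    have t1 : dist y (s : G) ≤ dist y w + dist w (s : G) := dist_triangle _ _ _
    have t2 : dist y (s' : G) ≤ dist y w' + dist w' (s' : G) := dist_triangle _ _ _
    have t0 : dist (s : G) (s' : G) ≤ dist (s : G) y + dist y (s' : G) := dist_triangle _ _ _
    have e0 : dist (s : G) y = dist y (s : G) := dist_comm _ _
    have e1 : dist (s' : G) (s : G) = dist (s : G) (s' : G) := dist_comm _ _
    linarith
  -- distance to K
  have hKdist : ∀ y : G, y ∉ K → ∃ δ > 0, ∀ z ∈ K, δ ≤ dist y z := by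
    intro y hy
    obtain ⟨δ, hδ, hball⟩ := Metric.isOpen_iff.mp hclosed.isOpen_compl y hy
    refine ⟨δ, hδ, fun z hz => ?_⟩
    by_contra h
    push_neg at h
    exact hball (by rw [Metric.mem_ball, dist_comm]; exact h) hz
  -- closedness estimate
  have L2 : ∀ g : G, g ∉ Tg → g ≠ 1 → g ∈ (H : Set G) →
      ∃ ε > 0, ∀ w ∈ Tg ∪ {1}, ε ≤ dist g w := by
    intro g hgT hg1 hgH
    have hgK : g ∉ K := by
      intro hgK
      rcases hgK with hgS | hg1'
      · exact hgT (Set.mem_iUnion.mpr ⟨⟨g, hgS⟩, hcsH ⟨g, hgS⟩ hgH⟩)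
      · exact hg1 (Set.mem_singleton_iff.mp hg1')
    obtain ⟨δ, hδ, hyK⟩ := hKdist g hgK
    have hg1d : 0 < dist g 1 := dist_pos.mpr hg1
    by_cases hc1 : ∃ s₀ : ↥S, ∃ w ∈ Set.range (c s₀), dist g w < δ / 2
    · obtain ⟨s₀, w₀, hw₀, hd₀⟩ := hc1
      have hgncl : g ∉ closure (Set.range (c s₀)) := by
        intro hgcl
        rcases hccl s₀ hgcl with hr | hx
        · exact hgT (Set.mem_iUnion.mpr ⟨s₀, hr⟩)
        · rcases hx with hx | hs
          · rw [hx] at hgT hgH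
            exact hgT (Set.mem_iUnion.mpr ⟨s₀, hcxH s₀ hgH⟩)
          · exact hgK (Or.inl ((Set.mem_singleton_iff.mp hs) ▸ s₀.2))
      have hnot : ¬ ∀ ε > 0, ∃ b ∈ Set.range (c s₀), dist g b < ε := by
        rw [← Metric.mem_closure_iff]; exact hgncl
      push_neg at hnot
      obtain ⟨ε₀, hε₀, hsep₀⟩ := hnot
      refine ⟨min (min ε₀ (δ / 2)) (dist g 1), by positivity, ?_⟩
      rintro w (hw | hw1)
      · obtain ⟨s', hs'⟩ := Set.mem_iUnion.mp hw
        by_cases hss : s' = s₀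
        · subst hss
          exact le_trans (le_trans (min_le_left _ _) (min_le_left _ _)) (hsep₀ w hs')
        · by_contra hlt
          push_neg at hlt
          have hwd : dist g w < δ / 2 :=
            lt_of_lt_of_le hlt (le_trans (min_le_left _ _) (min_le_right _ _))
          exact L1 g δ hδ hyK s₀ s' (fun h => hss h.symm) w₀ hw₀ w hs' hd₀ hwd
      · rw [Set.mem_singleton_iff.mp hw1]
        exact min_le_right _ _
    · push_neg at hc1
      refine ⟨min (δ / 2) (dist g 1), by positivity, ?_⟩
      rintro w (hw | hw1)
      · obtain ⟨s', hs'⟩ := Set.mem_iUnion.mp hw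
        exact le_trans (min_le_left _ _) (hc1 s' w hs')
      · rw [Set.mem_singleton_iff.mp hw1]
        exact min_le_right _ _
  -- isolation estimate
  have L3 : ∀ g ∈ Tg, ∃ ε > 0, ∀ w ∈ Tg, dist g w < ε → w = g := by
    intro g hg
    obtain ⟨s₀, hs₀⟩ := Set.mem_iUnion.mp hg
    obtain ⟨εj, hεj, hjsep⟩ : ∃ ε > 0, ∀ w ∈ Set.range (c s₀), dist g w < ε → w = g := by
      obtain ⟨j, hj⟩ := hs₀
      obtain ⟨ε, hε, hsep⟩ := hciso s₀ j
      refine ⟨ε, hε, ?_⟩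
      rintro w ⟨k, rfl⟩ hd
      rw [← hj]
      exact hsep k (by rw [hj]; exact hd)
    have hs₀' : g ∈ Set.range (c s₀) := hs₀
    by_cases hgK : g ∈ K
    · have hgs : g = (s₀ : G) := by
        by_contra hne
        have h8 := hρsep s₀ g hgK hne
        have hd : dist g (s₀ : G) ≤ ρ s₀ := hcd' s₀ g hs₀'
        have e : dist (s₀ : G) g = dist g (s₀ : G) := dist_comm _ _
        have := hρpos s₀
        linarith
      have hρ0 := hρpos s₀
      refine ⟨min (7 * ρ s₀) εj, lt_min (by linarith) hεj, ?_⟩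
      intro w hw hdw
      obtain ⟨s', hs'⟩ := Set.mem_iUnion.mp hw
      by_cases hss : s' = s₀
      · exact hjsep w (hss ▸ hs') (lt_of_lt_of_le hdw (min_le_right _ _))
      · exfalso
        have h8 : 8 * ρ s₀ ≤ dist (s₀ : G) (s' : G) :=
          hρsep s₀ _ (Or.inl s'.2) (fun h => hss (Subtype.ext h))
        have h8' : 8 * ρ s' ≤ dist (s' : G) (s₀ : G) :=
          hρsep s' _ (Or.inl s₀.2) (fun h => hss (Subtype.ext h.symm))
        have hws' : dist w (s' : G) ≤ ρ s' := hcd' s' w hs'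
        have t : dist (s₀ : G) (s' : G) ≤ dist (s₀ : G) w + dist w (s' : G) := dist_triangle _ _ _
        rw [hgs] at hdw
        have hdw' : dist (s₀ : G) w < 7 * ρ s₀ := lt_of_lt_of_le hdw (min_le_left _ _)
        have e : dist (s' : G) (s₀ : G) = dist (s₀ : G) (s' : G) := dist_comm _ _
        linarith
    · obtain ⟨δ, hδ, hyK⟩ := hKdist g hgK
      refine ⟨min (δ / 2) εj, lt_min (by positivity) hεj, ?_⟩
      intro w hw hdw
      obtain ⟨s', hs'⟩ := Set.mem_iUnion.mp hw
      by_cases hss : s' = s₀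
      · exact hjsep w (hss ▸ hs') (lt_of_lt_of_le hdw (min_le_right _ _))
      · exfalso
        have hd0 : dist g g < δ / 2 := by rw [dist_self]; positivity
        exact L1 g δ hδ hyK s₀ s' (fun h => hss h.symm) g hs₀' w hs'
          hd0 (lt_of_lt_of_le hdw (min_le_left _ _))
  refine ⟨T, ⟨?_, ?_, ?_⟩, ?_⟩
  · -- discrete
    rw [discreteTopology_subtype_iff]
    intro t ht
    rw [← nhdsWithin_inter']
    by_contra hne
    have hnb : (nhdsWithin t ({t}ᶜ ∩ T)).NeBot := Filter.neBot_iff.mpr hne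
    have hcl : t ∈ closure ({t}ᶜ ∩ T) := mem_closure_iff_nhdsWithin_neBot.mpr hnb
    rw [closure_subtype] at hcl
    obtain ⟨ε, hε, hsep⟩ := L3 (t : G) ht
    obtain ⟨b, hb, hdb⟩ := Metric.mem_closure_iff.mp hcl ε hε
    obtain ⟨w, hw, rfl⟩ := hb
    have hwTg : (w : G) ∈ Tg := hw.2
    have := hsep _ hwTg hdb
    exact hw.1 (Subtype.ext this)
  · -- closed
    rw [isClosed_induced_iff]
    refine ⟨closure (Tg ∪ {1}), isClosed_closure, ?_⟩
    ext h
    simp only [Set.mem_preimage, Set.mem_union, Set.mem_singleton_iff]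
    constructor
    · intro hcl
      by_contra hnot
      push_neg at hnot
      obtain ⟨hnT, hn1⟩ := hnot
      have h1 : (h : G) ∉ Tg := hnT
      have hne1 : (h : G) ≠ 1 := fun he => hn1 (Subtype.ext he)
      obtain ⟨ε, hε, hsep⟩ := L2 (h : G) h1 hne1 h.2
      obtain ⟨b, hb, hdb⟩ := Metric.mem_closure_iff.mp hcl ε hε
      exact absurd hdb (not_lt.mpr (hsep b hb))
    · rintro (hT | h1)
      · exact subset_closure (Or.inl hT)
      · apply subset_closure
        right
        rw [h1]
        rfl
  · -- dense
    have hmap : Subgroup.map H.subtype (Subgroup.closure T) = Subgroup.closure Tg := by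
      rw [MonoidHom.map_closure, Subgroup.coe_subtype, hvalT]
    have hDense : Dense ((Subgroup.closure Tg : Subgroup G) : Set G) := by
      have hSsub : S ∪ S⁻¹ ⊆ closure ((Subgroup.closure Tg : Subgroup G) : Set G) := by
        rintro g (hg | hg)
        · refine closure_mono ?_ (hs_cl ⟨g, hg⟩)
          exact SetLike.coe_subset_coe.mpr (Subgroup.closure_mono
            (Set.subset_iUnion (fun s : ↥S => Set.range (c s)) ⟨g, hg⟩))
        · rw [Set.mem_inv] at hg
          have h2 := hsi_cl ⟨g⁻¹, hg⟩
          simp only [inv_inv] at h2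
          refine closure_mono ?_ h2
          exact SetLike.coe_subset_coe.mpr (Subgroup.closure_mono
            (Set.subset_iUnion (fun s : ↥S => Set.range (c s)) ⟨g⁻¹, hg⟩))
      have hmono : ((Subgroup.closure S : Subgroup G) : Set G) ⊆
          closure ((Subgroup.closure Tg : Subgroup G) : Set G) := by
        intro g hg
        have hg' : g ∈ Submonoid.closure (S ∪ S⁻¹) := by
          rw [← Subgroup.closure_toSubmonoid]; exact hg
        have hle : Submonoid.closure (S ∪ S⁻¹) ≤
            (Subgroup.closure Tg).toSubmonoid.topologicalClosure :=
          Submonoid.closure_le.mpr (fun y hy => hSsub hy)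
        exact hle hg'
      have hsub2 : closure ((Subgroup.closure S : Subgroup G) : Set G) ⊆
          closure ((Subgroup.closure Tg : Subgroup G) : Set G) := by
        have := closure_mono hmono
        rwa [closure_closure] at this
      rw [dense_iff_closure_eq] at hdense ⊢
      exact Set.eq_univ_of_univ_subset (hdense ▸ hsub2)
    intro hh
    rw [closure_subtype]
    have himg : Subtype.val '' ((Subgroup.closure T : Subgroup ↥H) : Set ↥H) =
        ((Subgroup.closure Tg : Subgroup G) : Set G) := by
      rw [← hmap, Subgroup.coe_map, Subgroup.coe_subtype]
    rw [himg]
    exact hDense _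
  · -- cardinality
    have hchoice : ∀ t : ↥T, ∃ p : ↥S × ℕ, c p.1 p.2 = ((t : ↥H) : G) := by
      intro t
      have ht : ((t : ↥H) : G) ∈ Tg := t.2
      obtain ⟨s, hs⟩ := Set.mem_iUnion.mp ht
      obtain ⟨k, hk⟩ := hs
      exact ⟨(s, k), hk⟩
    choose f hf using hchoice
    have hinj : Function.Injective f := by
      intro t t' he
      have h1 : ((t : ↥H) : G) = ((t' : ↥H) : G) := by rw [← hf t, ← hf t', he]
      exact Subtype.ext (Subtype.ext h1)
    calc Cardinal.mk ↥T ≤ Cardinal.mk (↥S × ℕ) := Cardinal.mk_le_of_injective hinj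
      _ = Cardinal.mk ↥S * Cardinal.aleph0 := by
          simp [Cardinal.mk_prod, Cardinal.mk_nat, Cardinal.lift_aleph0, Cardinal.lift_uzero]
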